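/- Let G be a directed graph. For any representation M : ↑↑ → D into a bicomplete category D, let ∼_M be the equivalence relation on the set G(1) of arcs defined by x ∼_M y iff φ₁^{M,G}(x) = φ₁^{M,G}(y), where φ^{M,G} is the interface transformation of G with respect to M. Then ∼_{M₀} is contained in ∼_M for every such M; that is, the partition of the arc set induced by the standard representation M₀ is the finest among all partitions induced by representations. -/

import Mathlib

open CategoryTheory Limits Opposite WalkingParallelPair WalkingParallelPairHom

universe v w

section Machinery

variable {C : Type} [SmallCategory C] {D : Type w} [Category.{v} D]

/-- The diagram `Elts(G) → C → D` whose colimit is `G ⊗ M`. -/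
def elemDiagram (M : C ⥤ D) (G : Cᵒᵖ ⥤ Type) : G.Elementsᵒᵖ ⥤ D :=
  (CategoryOfElements.π G).leftOp ⋙ M

/-- `G ⊗ M`, the left Kan extension of `M` along Yoneda evaluated at `G`, computed as the
colimit of `M` over the category of elements of `G`. -/
noncomputable def tensorObj (M : C ⥤ D) (G : Cᵒᵖ ⥤ Type)
    [HasColimitsOfShape G.Elementsᵒᵖ D] : D :=
  colimit (elemDiagram M G)

/-- The colimit injection `μ^{M,G}_{(c,x)} : M(c) ⟶ G ⊗ M`. -/
noncomputable def tensorι (M : C ⥤ D) (G : Cᵒᵖ ⥤ Type)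
    [HasColimitsOfShape G.Elementsᵒᵖ D] (c : C) (x : G.obj (op c)) :
    M.obj c ⟶ tensorObj M G :=
  colimit.ι (elemDiagram M G) (op ⟨op c, x⟩)

/-- The diagram `Elts(y(c)) ≅ Over c → C → D` whose limit is the interface `Int_M(c)`. -/
def overDiagram (M : C ⥤ D) (c : C) : Over c ⥤ D :=
  Over.forget c ⋙ M

/-- The interface `Int_M(c)` of a representation `M` at `c`. -/
noncomputable def interfaceObj (M : C ⥤ D) [∀ c : C, HasLimitsOfShape (Over c) D] (c : C) : D :=
  limit (overDiagram M c)

/-- The limit projection `ν^{M,c}_{(c',f)} : Int_M(c) ⟶ M(c')`. -/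
noncomputable def interfaceπ (M : C ⥤ D) [∀ c : C, HasLimitsOfShape (Over c) D]
    {c' c : C} (f : c' ⟶ c) : interfaceObj M c ⟶ M.obj c' :=
  limit.π (overDiagram M c) (Over.mk f)

/-- The interface transformation `φ^{M,G}_c : G(c) → Hom_D(Int_M(c), G ⊗ M)`,
`x ↦ μ^{M,G}_{(c,x)} ∘ ν^{M,c}_{(c,id_c)}`. -/
noncomputable def interfaceTrans (M : C ⥤ D) (G : Cᵒᵖ ⥤ Type)
    [HasColimitsOfShape G.Elementsᵒᵖ D] [∀ c : C, HasLimitsOfShape (Over c) D]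
    (c : C) (x : G.obj (op c)) : interfaceObj M c ⟶ tensorObj M G :=
  interfaceπ M (𝟙 c) ≫ tensorι M G c x

end Machinery

section DirectedGraphs

/-- Arcs of a directed graph `G`, presented as a presheaf on the walking parallel pair. -/
abbrev arcs (G : WalkingParallelPairᵒᵖ ⥤ Type) : Type := G.obj (op one)

/-- Nodes of the directed graph `G`. -/
abbrev nodes (G : WalkingParallelPairᵒᵖ ⥤ Type) : Type := G.obj (op zero)

/-- The source map of `G`. -/
abbrev srcMap (G : WalkingParallelPairᵒᵖ ⥤ Type) : arcs G → nodes G :=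
  G.map (Quiver.Hom.op left)

/-- The target map of `G`. -/
abbrev tgtMap (G : WalkingParallelPairᵒᵖ ⥤ Type) : arcs G → nodes G :=
  G.map (Quiver.Hom.op right)

/-- The presheaf on `↑↑` (i.e. the directed graph) determined by source/target maps. -/
def dgPresheaf {A N : Type} (s t : A → N) : WalkingParallelPairᵒᵖ ⥤ Type :=
  walkingParallelPairOpEquiv.inverse ⋙ parallelPair (TypeCat.ofHom s) (TypeCat.ofHom t)

/-- A homomorphism of directed graphs, as a morphism of the associated presheaves. -/
def dgHom {A N A' N' : Type} (s t : A → N) (s' t' : A' → N')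
    (α : A → A') (ν : N → N') (hs : ∀ a, s' (α a) = ν (s a)) (ht : ∀ a, t' (α a) = ν (t a)) :
    dgPresheaf s t ⟶ dgPresheaf s' t' :=
  Functor.whiskerLeft walkingParallelPairOpEquiv.inverse
    (parallelPairHom (C := Type) (TypeCat.ofHom s) (TypeCat.ofHom t) (TypeCat.ofHom s')
      (TypeCat.ofHom t') (TypeCat.ofHom α) (TypeCat.ofHom ν)
      (by ext a; exact (hs a).symm) (by ext a; exact (ht a).symm))

end DirectedGraphs

/-- The standard representation `M₀` of `↑↑`: `M₀(0)` is the single-arrow graph `p₀ → p₁`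
(nodes `Bool`, `false = p₀`, `true = p₁`), `M₀(1)` is the path `q₀ → q₁ → q₂` (arcs `Bool`,
`false = b₀`, `true = b₁`; nodes `Fin 3`), with `M₀(m₀) : a ↦ b₀` (nodes `p₀ ↦ q₀, p₁ ↦ q₁`)
and `M₀(m₁) : a ↦ b₁` (nodes `p₀ ↦ q₁, p₁ ↦ q₂`). -/
def M0 : WalkingParallelPair ⥤ (WalkingParallelPairᵒᵖ ⥤ Type) :=
  parallelPair
    (dgHom (fun _ : PUnit => false) (fun _ => true)
      (fun b : Bool => if b then (1 : Fin 3) else 0) (fun b => if b then 2 else 1)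
      (fun _ => (0 : Fin 3)) (fun b : Bool => if b then 1 else 0)
      (fun _ => rfl) (fun _ => rfl))
    (dgHom (fun _ : PUnit => false) (fun _ => true)
      (fun b : Bool => if b then (1 : Fin 3) else 0) (fun b => if b then 2 else 1)
      (fun _ => (1 : Fin 3)) (fun b : Bool => if b then 2 else 1)
      (fun _ => rfl) (fun _ => rfl))

namespace Statement8Aux

/-- The zigzag generator relation on arcs: sharing a source or sharing a target. -/
def R (G : WalkingParallelPairᵒᵖ ⥤ Type) (a b : arcs G) : Prop :=
  srcMap G a = srcMap G b ∨ tgtMap G a = tgtMap G b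

section Fac

variable {D : Type w} [Category.{v} D] [HasLimits D] [HasColimits D]
variable (G : WalkingParallelPairᵒᵖ ⥤ Type) (M : WalkingParallelPair ⥤ D)

lemma interfaceTrans_fac (a : arcs G) (g : zero ⟶ one) :
    interfaceTrans M G one a = interfaceπ M g ≫ tensorι M G zero (G.map g.op a) := by
  have h1 : interfaceπ M (𝟙 one) = interfaceπ M g ≫ M.map g := by
    exact (limit.w (overDiagram M one)
      (Over.homMk g (by simp) : Over.mk g ⟶ Over.mk (𝟙 one))).symm
  have h2 : M.map g ≫ tensorι M G one a = tensorι M G zero (G.map g.op a) := by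
    exact colimit.w (elemDiagram M G) (Quiver.Hom.op
      (⟨g.op, rfl⟩ : (G.elementsMk (op one) a) ⟶ (G.elementsMk (op zero) (G.map g.op a))))
  rw [interfaceTrans, h1, Category.assoc, h2]

lemma interfaceTrans_eq_of_eqvGen {a b : arcs G} (hE : Relation.EqvGen (R G) a b) :
    interfaceTrans M G one a = interfaceTrans M G one b := by
  induction hE with
  | rel p q hpq =>
    rcases hpq with hs | ht
    · rw [interfaceTrans_fac G M p left, interfaceTrans_fac G M q left]
      exact congrArg (fun n => interfaceπ M left ≫ tensorι M G zero n) hs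
    · rw [interfaceTrans_fac G M p right, interfaceTrans_fac G M q right]
      exact congrArg (fun n => interfaceπ M right ≫ tensorι M G zero n) ht
  | refl => rfl
  | symm _ _ _ ih => exact ih.symm
  | trans _ _ _ _ _ ih1 ih2 => exact ih1.trans ih2

end Fac

section Extraction

variable (G : WalkingParallelPairᵒᵖ ⥤ Type)

/-- Tokens for node elements of `G ⊗ M₀`: `.inl (.inl n)` is `p₀(n)`, `.inl (.inr n)` is
`p₁(n)`, `.inr a` is the midpoint `q₁(a)` of the path of the arc `a`. -/
def W : Type := (nodes G ⊕ nodes G) ⊕ arcs G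

/-- The gluing relation on tokens. -/
inductive S : W G → W G → Prop
  | src (a : arcs G) : S (Sum.inl (Sum.inr (srcMap G a))) (Sum.inr a)
  | tgt (a : arcs G) : S (Sum.inl (Sum.inl (tgtMap G a))) (Sum.inr a)

/-- Interpret an element of the diagram defining `G ⊗ M₀` (at nodes) as a token. -/
def psiAux : ∀ (c : WalkingParallelPair), G.obj (op c) → (M0.obj c).obj (op zero) → W G
  | zero => fun n b => cond (show Bool from b) (Sum.inl (Sum.inr n)) (Sum.inl (Sum.inl n))
  | one => fun a v =>
      if (show Fin 3 from v) = 0 then Sum.inl (Sum.inl (srcMap G a))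
      else if (show Fin 3 from v) = 1 then Sum.inr a
      else Sum.inl (Sum.inr (tgtMap G a))

/-- The diagram in `Type` whose colimit is the node set of `G ⊗ M₀`. -/
def F' : G.Elementsᵒᵖ ⥤ Type :=
  elemDiagram M0 G ⋙ (evaluation WalkingParallelPairᵒᵖ Type).obj (op zero)

/-- The invariant sending a point of the diagram to its token class. -/
def Psi (p : Σ j : G.Elementsᵒᵖ, (F' G).obj j) : Quot (S G) :=
  Quot.mk _ (psiAux G p.1.unop.1.unop p.1.unop.2 p.2)

lemma Psi_rel {p p' : Σ j : G.Elementsᵒᵖ, (F' G).obj j}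
    (hpp : (F' G).ColimitTypeRel p p') : Psi G p = Psi G p' := by
  obtain ⟨j, v⟩ := p
  obtain ⟨j', v'⟩ := p'
  obtain ⟨f, hf⟩ := hpp
  obtain ⟨⟨⟨c⟩, g⟩⟩ := j
  obtain ⟨⟨⟨c'⟩, g'⟩⟩ := j'
  dsimp at f hf
  rw [hf]
  obtain ⟨⟨⟨ζ⟩, hu⟩⟩ := f
  change WalkingParallelPairHom c c' at ζ
  cases ζ with
  | id =>
      have hg : G.map (𝟙 (op c)) g' = g := hu
      rw [FunctorToTypes.map_id_apply] at hg
      subst hg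
      exact congrArg (fun t => Psi G ⟨Opposite.op ⟨op c, g'⟩, t⟩)
        (Functor.map_id_apply (F' G) (Opposite.op ⟨op c, g'⟩) v).symm
  | left =>
      have hg : srcMap G g' = g := hu
      subst hg
      cases v with
      | false => rfl
      | true => exact Quot.sound (S.src g')
  | right =>
      have hg : tgtMap G g' = g := hu
      subst hg
      cases v with
      | false => exact Quot.sound (S.tgt g')
      | true => rfl

lemma Psi_eqvGen {p p' : Σ j : G.Elementsᵒᵖ, (F' G).obj j}
    (hpp : Relation.EqvGen ((F' G).ColimitTypeRel) p p') : Psi G p = Psi G p' := by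
  induction hpp with
  | rel _ _ hr => exact Psi_rel G hr
  | refl => rfl
  | symm _ _ _ ih => exact ih.symm
  | trans _ _ _ _ _ ih1 ih2 => exact ih1.trans ih2

/-- Read off the zigzag class of arcs from a token. -/
def chi : W G → arcs G → Prop
  | Sum.inl (Sum.inl n) => fun b => ∃ a, tgtMap G a = n ∧ Relation.EqvGen (R G) a b
  | Sum.inl (Sum.inr n) => fun b => ∃ a, srcMap G a = n ∧ Relation.EqvGen (R G) a b
  | Sum.inr a => Relation.EqvGen (R G) a

lemma chi_sound {w w' : W G} (hww : S G w w') : chi G w = chi G w' := by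
  cases hww with
  | src a =>
      funext b
      apply propext
      constructor
      · rintro ⟨c, hc, hcb⟩
        exact Relation.EqvGen.trans _ _ _
          (Relation.EqvGen.rel a c (Or.inl hc.symm)) hcb
      · intro hab
        exact ⟨a, rfl, hab⟩
  | tgt a =>
      funext b
      apply propext
      constructor
      · rintro ⟨c, hc, hcb⟩
        exact Relation.EqvGen.trans _ _ _
          (Relation.EqvGen.rel a c (Or.inr hc.symm)) hcb
      · intro hab
        exact ⟨a, rfl, hab⟩

def chiQ : Quot (S G) → arcs G → Prop :=
  Quot.lift (chi G) (fun _ _ h => chi_sound G h)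

end Extraction

section W0

/-- The distinguished node of `M₀(c)` over each object of `Over one`:
the middle node `q₁` at `𝟙 one`, the node `p₁` at `left`, the node `p₀` at `right`. -/
def pick : ∀ {c : WalkingParallelPair}, (c ⟶ one) → (M0.obj c).obj (op zero)
  | _, WalkingParallelPairHom.left => true
  | _, WalkingParallelPairHom.right => false
  | _, WalkingParallelPairHom.id _ => show Fin 3 from 1

lemma pick_compat : ∀ {c c' : WalkingParallelPair} (g : c ⟶ one) (g' : c' ⟶ one) (ff : c ⟶ c'),
    ff ≫ g' = g → (M0.map ff).app (op zero) (pick g) = pick g' := by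
  intro c c' g g' ff hff
  change WalkingParallelPairHom c c' at ff
  cases ff with
  | id =>
      have hg : g' = g := hff
      subst hg
      have hmap : M0.map (WalkingParallelPairHom.id c) = 𝟙 (M0.obj c) := M0.map_id c
      rw [hmap]
      rfl
  | left =>
      change WalkingParallelPairHom one one at g'
      cases g' with
      | id =>
          have hg : WalkingParallelPairHom.left = g := hff
          subst hg
          rfl
  | right =>
      change WalkingParallelPairHom one one at g'
      cases g' with
      | id =>
          have hg : WalkingParallelPairHom.right = g := hff
          subst hg
          rfl

/-- The compatible family of nodes defining the distinguished node of `Int_{M₀}(1)`. -/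
noncomputable def w0sec : limit (overDiagram M0 one ⋙ (evaluation WalkingParallelPairᵒᵖ Type).obj (op zero)) :=
  Types.Limit.mk (overDiagram M0 one ⋙ (evaluation WalkingParallelPairᵒᵖ Type).obj (op zero))
    (fun j => pick j.hom)
    (fun j j' ff => pick_compat j.hom j'.hom ff.left (Over.w ff))

/-- The distinguished node (the "interface node") of `Int_{M₀}(1)`. -/
noncomputable def w0 : (interfaceObj M0 one).obj (op zero) :=
  (limitObjIsoLimitCompEvaluation (overDiagram M0 one) (op zero)).inv w0sec

/-- The middle node `q₁` of the path `M₀(1)`. -/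
def rho : (M0.obj one).obj (op zero) := show Fin 3 from 1

lemma w0_pi : (interfaceπ M0 (𝟙 one)).app (op zero) w0 = rho := by
  have h1 := ConcreteCategory.congr_hom
    (limitObjIsoLimitCompEvaluation_inv_π_app (overDiagram M0 one) (Over.mk (𝟙 one)) (op zero))
    w0sec
  exact h1.trans (Types.Limit.π_mk _ _ _ _)

end W0

section Final

variable (G : WalkingParallelPairᵒᵖ ⥤ Type)

lemma eqvGen_of_eq {x y : arcs G}
    (h : interfaceTrans M0 G one x = interfaceTrans M0 G one y) :
    Relation.EqvGen (R G) x y := by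
  have h0 : (tensorι M0 G one x).app (op zero) rho
      = (tensorι M0 G one y).app (op zero) rho := by
    have hx : (tensorι M0 G one x).app (op zero) ((interfaceπ M0 (𝟙 one)).app (op zero) w0)
        = (tensorι M0 G one y).app (op zero) ((interfaceπ M0 (𝟙 one)).app (op zero) w0) :=
      ConcreteCategory.congr_hom (congrArg (fun t => NatTrans.app t (op zero)) h) w0
    rw [w0_pi] at hx
    exact hx
  have h1 : colimit.ι (F' G) (Opposite.op (G.elementsMk (op one) x)) rho
      = colimit.ι (F' G) (Opposite.op (G.elementsMk (op one) y)) rho := by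
    have ex := ConcreteCategory.congr_hom (colimitObjIsoColimitCompEvaluation_ι_inv (elemDiagram M0 G)
      (Opposite.op (G.elementsMk (op one) x)) (op zero)) rho
    have ey := ConcreteCategory.congr_hom (colimitObjIsoColimitCompEvaluation_ι_inv (elemDiagram M0 G)
      (Opposite.op (G.elementsMk (op one) y)) (op zero)) rho
    have hinv : (colimitObjIsoColimitCompEvaluation (elemDiagram M0 G) (op zero)).inv
          (colimit.ι (F' G) (Opposite.op (G.elementsMk (op one) x)) rho)
        = (colimitObjIsoColimitCompEvaluation (elemDiagram M0 G) (op zero)).inv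
          (colimit.ι (F' G) (Opposite.op (G.elementsMk (op one) y)) rho) :=
      ex.trans (h0.trans ey.symm)
    have hcongr := congrArg (colimitObjIsoColimitCompEvaluation (elemDiagram M0 G) (op zero)).hom hinv
    have hix : ∀ z, (colimitObjIsoColimitCompEvaluation (elemDiagram M0 G) (op zero)).hom
        ((colimitObjIsoColimitCompEvaluation (elemDiagram M0 G) (op zero)).inv z) = z :=
      fun z => ConcreteCategory.congr_hom (colimitObjIsoColimitCompEvaluation (elemDiagram M0 G) (op zero)).inv_hom_id z
    exact (hix _).symm.trans (hcongr.trans (hix _))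
  have h2 := Types.colimit_eq h1
  have h3 := Psi_eqvGen G h2
  have h4 : Quot.mk (S G) (Sum.inr x) = Quot.mk (S G) (Sum.inr y) := h3
  have h5 : Relation.EqvGen (R G) x = Relation.EqvGen (R G) y := congrArg (chiQ G) h4
  exact cast (congrFun h5 y).symm (Relation.EqvGen.refl y)

end Final

end Statement8Aux

/-- For a directed graph `G` and any representation `M : ↑↑ ⥤ D` into a
bicomplete category `D`, the equivalence relation on arcs induced by the fibers of the
interface transformation `φ₁^{M₀,G}` for the standard representation `M₀` refines the one
induced by `φ₁^{M,G}`: `∼_{M₀} ⊆ ∼_M`. -/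
theorem statement8 (G : WalkingParallelPairᵒᵖ ⥤ Type)
    {D : Type w} [Category.{v} D] [HasLimits D] [HasColimits D]
    (M : WalkingParallelPair ⥤ D) (x y : arcs G)
    (h : interfaceTrans M0 G one x = interfaceTrans M0 G one y) :
    interfaceTrans M G one x = interfaceTrans M G one y :=
  Statement8Aux.interfaceTrans_eq_of_eqvGen G M (Statement8Aux.eqvGen_of_eq G h)
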